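/- For any D-table expression D of rank k and size n, the guarded-row set ⟦D⟧ produced by the reduction contains at most n^k rows, and consequently for a rank-k formula F the QFLIA formula ⟦F⟧ has size O(n^{k+1}). -/
import Mathlib


namespace DLogic

/-- Integer terms of the logic D (rows are flattened into tuples of integers;
`col d i` is de Bruijn-style access to column `i` of the row bound by the
`d`-th enclosing selection). -/
inductive Term : Type
  | var : ℕ → Term
  | col : ℕ → ℕ → Term
  | const : ℤ → Term
  | add : Term → Term → Term
  | mul : ℤ → Term → Term

mutual
  /-- Table expressions of D. -/
  inductive Table : Type
    | input : List (List Term) → Table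
    | sel : Formula → Table → Table
    | prod : Table → Table → Table
    | union : Table → Table → Table
  /-- Formulas of D. -/
  inductive Formula : Type
    | le : Term → Term → Formula
    | nonempty : Table → Formula
    | not : Formula → Formula
    | or : Formula → Formula → Formula
end

def Term.eval (env : ℕ → ℤ) (stk : List (List ℤ)) : Term → ℤ
  | .var n => env n
  | .col d i => (stk.getD d []).getD i 0
  | .const k => k
  | .add a b => a.eval env stk + b.eval env stk
  | .mul k t => k * t.eval env stk

mutual
  /-- The finite set (list) of rows denoted by a table expression. -/
  def Table.eval (env : ℕ → ℤ) (stk : List (List ℤ)) : Table → List (List ℤ)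
    | .input rows => rows.map (fun r => r.map (fun t => t.eval env stk))
    | .sel F D => (D.eval env stk).filter (fun r => F.eval env (r :: stk))
    | .prod D₁ D₂ =>
        (D₁.eval env stk).flatMap (fun r₁ => (D₂.eval env stk).map (fun r₂ => r₁ ++ r₂))
    | .union D₁ D₂ => D₁.eval env stk ++ D₂.eval env stk
  /-- Truth value of a D formula. -/
  def Formula.eval (env : ℕ → ℤ) (stk : List (List ℤ)) : Formula → Bool
    | .le t₁ t₂ => decide (t₁.eval env stk ≤ t₂.eval env stk)
    | .nonempty D => !(D.eval env stk).isEmpty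
    | .not F => !(F.eval env stk)
    | .or F₁ F₂ => F₁.eval env stk || F₂.eval env stk
end

/-- Satisfiability of a D formula. -/
def Satisfiable (F : Formula) : Prop := ∃ env : ℕ → ℤ, F.eval env [] = true

end DLogic

namespace DLogic

def Term.size : Term → ℕ
  | .var _ => 1
  | .col _ _ => 1
  | .const _ => 1
  | .add a b => a.size + b.size + 1
  | .mul _ t => t.size + 1

mutual
  def Table.size : Table → ℕ
    | .input rows => 1 + (rows.map (fun r => 1 + (r.map Term.size).sum)).sum
    | .sel F D => 1 + F.size + D.size
    | .prod D₁ D₂ => 1 + D₁.size + D₂.size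
    | .union D₁ D₂ => 1 + D₁.size + D₂.size
  def Formula.size : Formula → ℕ
    | .le t₁ t₂ => 1 + t₁.size + t₂.size
    | .nonempty D => 1 + D.size
    | .not F => 1 + F.size
    | .or F₁ F₂ => 1 + F₁.size + F₂.size
end

mutual
  def Table.rank : Table → ℕ
    | .input _ => 1
    | .sel F D => F.rank + D.rank
    | .prod D₁ D₂ => D₁.rank + D₂.rank
    | .union D₁ D₂ => max D₁.rank D₂.rank
  def Formula.rank : Formula → ℕ
    | .le _ _ => 0
    | .nonempty D => D.rank
    | .not F => F.rank
    | .or F₁ F₂ => max F₁.rank F₂.rank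
end

/-- The number of guarded rows in the guarded-row set `⟦D⟧` of the
reduction. -/
def Table.redCount : Table → ℕ
  | .input rows => rows.length
  | .sel _ D => D.redCount
  | .prod D₁ D₂ => D₁.redCount * D₂.redCount
  | .union D₁ D₂ => D₁.redCount + D₂.redCount

/- Size estimates for the output of the reduction: `Table.redSize D` bounds
the total size of the guarded rows of `⟦D⟧`, and `Formula.redSize F` the size
of the QFLIA formula `⟦F⟧`. -/
mutual
  def Table.redSize : Table → ℕ
    | .input rows => 1 + (rows.map (fun r => 1 + (r.map Term.size).sum)).sum
    | .sel F D => D.redSize + D.redCount * (F.redSize + 1)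
    | .prod D₁ D₂ =>
        D₂.redCount * D₁.redSize + D₁.redCount * D₂.redSize +
          D₁.redCount * D₂.redCount
    | .union D₁ D₂ => D₁.redSize + D₂.redSize
  def Formula.redSize : Formula → ℕ
    | .le t₁ t₂ => 1 + t₁.size + t₂.size
    | .nonempty D => D.redSize + D.redCount + 1
    | .not F => F.redSize + 1
    | .or F₁ F₂ => F₁.redSize + F₂.redSize + 1
end

end DLogic

namespace DLogic

theorem Table.one_le_size (D : Table) : 1 ≤ D.size := by
  cases D <;> simp [Table.size] <;> omega

theorem Formula.one_le_size (F : Formula) : 1 ≤ F.size := by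
  cases F <;> simp [Formula.size] <;> omega

theorem Table.one_le_rank : ∀ D : Table, 1 ≤ D.rank
  | .input _ => le_refl 1
  | .sel F D => le_trans (Table.one_le_rank D) (by simp [Table.rank])
  | .prod D₁ D₂ => le_trans (Table.one_le_rank D₁) (by simp [Table.rank])
  | .union D₁ D₂ => le_trans (Table.one_le_rank D₁) (by simp [Table.rank])

theorem len_le_sum (l : List (List Term)) :
    l.length ≤ (l.map (fun r => 1 + (r.map Term.size).sum)).sum := by
  induction l with
  | nil => simp
  | cons h t ih => simp only [List.map_cons, List.sum_cons, List.length_cons]; omega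

theorem Table.redCount_le : ∀ D : Table, D.redCount ≤ D.size ^ D.rank
  | .input rows => by
      simp only [Table.redCount, Table.size, Table.rank, pow_one]
      have := len_le_sum rows; omega
  | .sel F D => by
      simp only [Table.redCount, Table.size, Table.rank]
      calc D.redCount ≤ D.size ^ D.rank := Table.redCount_le D
        _ ≤ (1 + F.size + D.size) ^ D.rank :=
            Nat.pow_le_pow_left (by omega) _
        _ ≤ (1 + F.size + D.size) ^ (F.rank + D.rank) :=
            Nat.pow_le_pow_right (by omega) (Nat.le_add_left _ _)
  | .prod D₁ D₂ => by
      simp only [Table.redCount, Table.size, Table.rank]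
      calc D₁.redCount * D₂.redCount
          ≤ D₁.size ^ D₁.rank * D₂.size ^ D₂.rank :=
            Nat.mul_le_mul (Table.redCount_le D₁) (Table.redCount_le D₂)
        _ ≤ (1 + D₁.size + D₂.size) ^ D₁.rank * (1 + D₁.size + D₂.size) ^ D₂.rank :=
            Nat.mul_le_mul (Nat.pow_le_pow_left (by omega) _)
              (Nat.pow_le_pow_left (by omega) _)
        _ = (1 + D₁.size + D₂.size) ^ (D₁.rank + D₂.rank) := (pow_add _ _ _).symm
  | .union D₁ D₂ => by
      simp only [Table.redCount, Table.size, Table.rank]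
      have h1 : 1 ≤ D₁.size := D₁.one_le_size
      have h2 : 1 ≤ D₂.size := D₂.one_le_size
      have hm : max D₁.rank D₂.rank ≠ 0 := by
        have := D₁.one_le_rank; omega
      calc D₁.redCount + D₂.redCount
          ≤ D₁.size ^ D₁.rank + D₂.size ^ D₂.rank :=
            Nat.add_le_add (Table.redCount_le D₁) (Table.redCount_le D₂)
        _ ≤ D₁.size ^ (max D₁.rank D₂.rank) + D₂.size ^ (max D₁.rank D₂.rank) :=
            Nat.add_le_add (Nat.pow_le_pow_right h1 (le_max_left _ _))
              (Nat.pow_le_pow_right h2 (le_max_right _ _))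
        _ ≤ (D₁.size + D₂.size) ^ (max D₁.rank D₂.rank) :=
            pow_add_pow_le (Nat.zero_le _) (Nat.zero_le _) hm
        _ ≤ (1 + D₁.size + D₂.size) ^ (max D₁.rank D₂.rank) :=
            Nat.pow_le_pow_left (by omega) _

mutual
theorem Table.redSize_le : ∀ D : Table,
    D.redSize + D.redCount ≤ D.size ^ (D.rank + 1)
  | .input rows => by
      simp only [Table.redSize, Table.redCount, Table.size, Table.rank]
      have h := len_le_sum rows
      set s := (rows.map (fun r => 1 + (r.map Term.size).sum)).sum
      calc 1 + s + rows.length ≤ 1 + s + s := by omega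
        _ ≤ (1 + s) ^ 2 := by ring_nf; nlinarith
        _ = (1 + s) ^ (1 + 1) := rfl
  | .sel F D => by
      simp only [Table.redSize, Table.redCount, Table.size, Table.rank]
      have hD := Table.redSize_le D
      have hF := Formula.redSize_le F
      have hc := Table.redCount_le D
      set f := F.size; set d := D.size
      set rf := F.rank; set rd := D.rank
      have key : D.redSize + D.redCount * (F.redSize + 1) + D.redCount
          ≤ d ^ rd * (d + (F.redSize + 1)) := by
        have : d ^ (rd + 1) = d ^ rd * d := pow_succ d rd
        nlinarith [Nat.zero_le D.redCount]
      calc D.redSize + D.redCount * (F.redSize + 1) + D.redCount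
          ≤ d ^ rd * (d + (F.redSize + 1)) := key
        _ ≤ d ^ rd * (f ^ (rf + 1) + (d + 1)) := by
            apply Nat.mul_le_mul_left; omega
        _ ≤ d ^ rd * (f ^ (rf + 1) + (d + 1) ^ (rf + 1)) := by
            apply Nat.mul_le_mul_left
            have : d + 1 ≤ (d + 1) ^ (rf + 1) := Nat.le_self_pow (by omega) _
            omega
        _ ≤ d ^ rd * (f + (d + 1)) ^ (rf + 1) := by
            apply Nat.mul_le_mul_left
            exact pow_add_pow_le (Nat.zero_le _) (Nat.zero_le _) (by omega)
        _ = d ^ rd * (1 + f + d) ^ (rf + 1) := by ring_nf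
        _ ≤ (1 + f + d) ^ rd * (1 + f + d) ^ (rf + 1) :=
            Nat.mul_le_mul_right _ (Nat.pow_le_pow_left (by omega) _)
        _ = (1 + f + d) ^ (rf + rd + 1) := by rw [← pow_add]; ring_nf
  | .prod D₁ D₂ => by
      simp only [Table.redSize, Table.redCount, Table.size, Table.rank]
      have h1 := Table.redSize_le D₁
      have h2 := Table.redSize_le D₂
      have c1 := Table.redCount_le D₁
      have c2 := Table.redCount_le D₂
      set n1 := D₁.size; set n2 := D₂.size
      set r1 := D₁.rank; set r2 := D₂.rank
      calc D₂.redCount * D₁.redSize + D₁.redCount * D₂.redSize +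
            D₁.redCount * D₂.redCount + D₁.redCount * D₂.redCount
          = D₂.redCount * (D₁.redSize + D₁.redCount) +
              D₁.redCount * (D₂.redSize + D₂.redCount) := by ring
        _ ≤ n2 ^ r2 * n1 ^ (r1 + 1) + n1 ^ r1 * n2 ^ (r2 + 1) :=
            Nat.add_le_add (Nat.mul_le_mul c2 h1) (Nat.mul_le_mul c1 h2)
        _ = n1 ^ r1 * n2 ^ r2 * (n1 + n2) := by
            rw [pow_succ, pow_succ]; ring
        _ ≤ (1 + n1 + n2) ^ r1 * (1 + n1 + n2) ^ r2 * (1 + n1 + n2) := by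
            apply Nat.mul_le_mul _ (by omega)
            exact Nat.mul_le_mul (Nat.pow_le_pow_left (by omega) _)
              (Nat.pow_le_pow_left (by omega) _)
        _ = (1 + n1 + n2) ^ (r1 + r2 + 1) := by
            rw [pow_add, pow_add, pow_one]
  | .union D₁ D₂ => by
      simp only [Table.redSize, Table.redCount, Table.size, Table.rank]
      have h1 := Table.redSize_le D₁
      have h2 := Table.redSize_le D₂
      have s1 : 1 ≤ D₁.size := D₁.one_le_size
      have s2 : 1 ≤ D₂.size := D₂.one_le_size
      calc D₁.redSize + D₂.redSize + (D₁.redCount + D₂.redCount)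
          ≤ D₁.size ^ (D₁.rank + 1) + D₂.size ^ (D₂.rank + 1) := by omega
        _ ≤ D₁.size ^ (max D₁.rank D₂.rank + 1) + D₂.size ^ (max D₁.rank D₂.rank + 1) :=
            Nat.add_le_add
              (Nat.pow_le_pow_right s1 (by omega))
              (Nat.pow_le_pow_right s2 (by omega))
        _ ≤ (D₁.size + D₂.size) ^ (max D₁.rank D₂.rank + 1) :=
            pow_add_pow_le (Nat.zero_le _) (Nat.zero_le _) (by omega)
        _ ≤ (1 + D₁.size + D₂.size) ^ (max D₁.rank D₂.rank + 1) :=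
            Nat.pow_le_pow_left (by omega) _

theorem Formula.redSize_le : ∀ F : Formula, F.redSize ≤ F.size ^ (F.rank + 1)
  | .le t₁ t₂ => by
      simp [Formula.redSize, Formula.size, Formula.rank]
  | .nonempty D => by
      simp only [Formula.redSize, Formula.size, Formula.rank]
      have h := Table.redSize_le D
      calc D.redSize + D.redCount + 1 ≤ D.size ^ (D.rank + 1) + 1 ^ (D.rank + 1) := by
            simp; omega
        _ ≤ (D.size + 1) ^ (D.rank + 1) :=
            pow_add_pow_le (Nat.zero_le _) (Nat.zero_le _) (by omega)
        _ = (1 + D.size) ^ (D.rank + 1) := by ring_nf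
  | .not F => by
      simp only [Formula.redSize, Formula.size, Formula.rank]
      have h := Formula.redSize_le F
      calc F.redSize + 1 ≤ F.size ^ (F.rank + 1) + 1 ^ (F.rank + 1) := by simp; omega
        _ ≤ (F.size + 1) ^ (F.rank + 1) :=
            pow_add_pow_le (Nat.zero_le _) (Nat.zero_le _) (by omega)
        _ = (1 + F.size) ^ (F.rank + 1) := by ring_nf
  | .or F₁ F₂ => by
      simp only [Formula.redSize, Formula.size, Formula.rank]
      have h1 := Formula.redSize_le F₁
      have h2 := Formula.redSize_le F₂
      have s1 : 1 ≤ F₁.size := F₁.one_le_size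
      have s2 : 1 ≤ F₂.size := F₂.one_le_size
      calc F₁.redSize + F₂.redSize + 1
          ≤ F₁.size ^ (max F₁.rank F₂.rank + 1) + F₂.size ^ (max F₁.rank F₂.rank + 1)
              + 1 ^ (max F₁.rank F₂.rank + 1) := by
            have a1 : F₁.size ^ (F₁.rank + 1) ≤ F₁.size ^ (max F₁.rank F₂.rank + 1) :=
              Nat.pow_le_pow_right s1 (by omega)
            have a2 : F₂.size ^ (F₂.rank + 1) ≤ F₂.size ^ (max F₁.rank F₂.rank + 1) :=
              Nat.pow_le_pow_right s2 (by omega)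
            simp; omega
        _ ≤ (F₁.size + F₂.size) ^ (max F₁.rank F₂.rank + 1)
              + 1 ^ (max F₁.rank F₂.rank + 1) :=
            Nat.add_le_add_right
              (pow_add_pow_le (Nat.zero_le _) (Nat.zero_le _) (by omega)) _
        _ ≤ (F₁.size + F₂.size + 1) ^ (max F₁.rank F₂.rank + 1) :=
            pow_add_pow_le (Nat.zero_le _) (Nat.zero_le _) (by omega)
        _ = (1 + F₁.size + F₂.size) ^ (max F₁.rank F₂.rank + 1) := by ring_nf
end

end DLogic

/-- A D table expression `D` of rank `k` and size `n`
yields at most `n ^ k` guarded rows under the reduction, and consequently for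
a formula `F` of rank at most `k` the reduced QFLIA formula `⟦F⟧` has size
`O(n^(k+1))` in the size `n` of `F`. -/
theorem DLogic.reduction_size_bound :
    (∀ D : DLogic.Table, D.redCount ≤ D.size ^ D.rank) ∧
    (∀ k : ℕ, ∃ C : ℕ, ∀ F : DLogic.Formula,
      F.rank ≤ k → F.redSize ≤ C * (F.size + 1) ^ (k + 1)) := by
  constructor
  · exact DLogic.Table.redCount_le
  · intro k
    refine ⟨1, fun F hr => ?_⟩
    rw [one_mul]
    calc F.redSize ≤ F.size ^ (F.rank + 1) := F.redSize_le
      _ ≤ (F.size + 1) ^ (F.rank + 1) := Nat.pow_le_pow_left (by omega) _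
      _ ≤ (F.size + 1) ^ (k + 1) :=
          Nat.pow_le_pow_right (by omega) (by omega)
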